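/- arXiv:1802.00818 — 3 statements merged into one kernel-verified Lean document; each statement's English description precedes it below -/
import Mathlib

section
/- Let b₁, …, b_{2N} ∈ ℝ³ be a trivial drive, i.e., b_n = b_{2N+1−n} for all 1 ≤ n ≤ 2N (the steps are exactly retraced in reverse). Then the loop condition Σ_{n=1}^{2N} (−1)^{n+1} b_n = 0 holds, and the characteristic sum vanishes: S(b) = Σ_{n=1}^{2N−1} (−1)ⁿ (d_n × b_{n+1}) = 0. Consequently the signed area and the characteristic reciprocal lattice vector of a trivial drive are zero. -/
open Matrix Finset

lemma negpow_eq {a c : ℕ} (h : a % 2 = c % 2) : (-1 : ℝ) ^ a = (-1 : ℝ) ^ c := by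
  rcases Nat.even_or_odd a with ha | ha
  · have ha' := Nat.even_iff.mp ha
    rw [ha.neg_one_pow, (Nat.even_iff.mpr (by omega)).neg_one_pow]
  · have ha' := Nat.odd_iff.mp ha
    rw [ha.neg_one_pow, (Nat.odd_iff.mpr (by omega)).neg_one_pow]

/-- The displacement vector after `n` steps of a 3D exchange drive:
`d_n = Σ_{k=1}^{n} (−1)^{k+1} b_k`. -/
noncomputable def disp3 (b : ℕ → Fin 3 → ℝ) (n : ℕ) : Fin 3 → ℝ :=
  ∑ k ∈ Finset.Icc 1 n, (-1 : ℝ) ^ (k + 1) • b k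

/-- The characteristic sum `S(b) = Σ_{n=1}^{2N−1} (−1)ⁿ (d_n × b_{n+1})` of a 3D
exchange drive of length `2N`. -/
noncomputable def charSum (N : ℕ) (b : ℕ → Fin 3 → ℝ) : Fin 3 → ℝ :=
  ∑ n ∈ Finset.Icc 1 (2 * N - 1), (-1 : ℝ) ^ n • ((disp3 b n) ⨯₃ (b (n + 1)))

lemma disp3_as_Ioc (b : ℕ → Fin 3 → ℝ) (n : ℕ) :
    disp3 b n = ∑ k ∈ Finset.Ioc 0 n, (-1 : ℝ) ^ (k + 1) • b k := by
  unfold disp3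
  congr 1

lemma disp3_succ (b : ℕ → Fin 3 → ℝ) (n : ℕ) :
    disp3 b (n + 1) = disp3 b n + (-1 : ℝ) ^ (n + 2) • b (n + 1) := by
  unfold disp3
  rw [Finset.sum_Icc_succ_top (by omega : 1 ≤ n + 1)]

/-- For a trivial drive `b₁, …, b_{2N}` (one whose steps are exactly
retraced in reverse: `b_n = b_{2N+1−n}`), the loop condition
`Σ_{n=1}^{2N} (−1)^{n+1} b_n = 0` holds and the characteristic sum
`S(b) = Σ_{n=1}^{2N−1} (−1)ⁿ (d_n × b_{n+1})` vanishes; consequently the signed area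
and the characteristic reciprocal lattice vector of a trivial drive are zero. -/
theorem stmt_5 (N : ℕ) (b : ℕ → Fin 3 → ℝ)
    (htriv : ∀ n, 1 ≤ n → n ≤ 2 * N → b n = b (2 * N + 1 - n)) :
    (∑ n ∈ Finset.Icc 1 (2 * N), (-1 : ℝ) ^ (n + 1) • b n = 0)
    ∧ charSum N b = 0 := by
  -- Part 1: the loop condition, by the pairing `n ↔ 2N+1-n`.
  have h1 : ∑ n ∈ Finset.Icc 1 (2 * N), (-1 : ℝ) ^ (n + 1) • b n = 0 := by
    apply Finset.sum_involution (fun n _ => 2 * N + 1 - n)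
    · intro n hn
      simp only [Finset.mem_Icc] at hn
      rw [← htriv n hn.1 hn.2]
      have hpow : (-1 : ℝ) ^ (2 * N + 1 - n + 1) = (-1 : ℝ) ^ n := negpow_eq (by omega)
      rw [hpow, pow_succ]
      module
    · intro n hn _
      simp only [Finset.mem_Icc] at hn
      omega
    · intro n hn
      simp only [Finset.mem_Icc] at hn ⊢
      omega
    · intro n hn
      simp only [Finset.mem_Icc] at hn
      omega
  refine ⟨h1, ?_⟩
  have hloop : disp3 b (2 * N) = 0 := h1
  -- Reflection symmetry of displacements: `d_{2N-m} = d_m`.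
  have hrefl : ∀ m, m ≤ 2 * N → disp3 b (2 * N - m) = disp3 b m := by
    intro m hm
    have hsplit : disp3 b (2 * N - m)
        + ∑ k ∈ Finset.Ioc (2 * N - m) (2 * N), (-1 : ℝ) ^ (k + 1) • b k
        = disp3 b (2 * N) := by
      rw [disp3_as_Ioc, disp3_as_Ioc]
      exact Finset.sum_Ioc_consecutive _ (by omega) (by omega)
    have hmap : ∑ k ∈ Finset.Ioc (2 * N - m) (2 * N), (-1 : ℝ) ^ (k + 1) • b k
        = ∑ k ∈ Finset.Ioc 0 m, (-1 : ℝ) ^ k • b k := by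
      apply Finset.sum_nbij' (fun k => 2 * N + 1 - k) (fun k => 2 * N + 1 - k)
      · intro a ha; simp only [Finset.mem_Ioc] at ha ⊢; omega
      · intro a ha; simp only [Finset.mem_Ioc] at ha ⊢; omega
      · intro a ha; simp only [Finset.mem_Ioc] at ha; omega
      · intro a ha; simp only [Finset.mem_Ioc] at ha; omega
      · intro a ha
        simp only [Finset.mem_Ioc] at ha
        rw [htriv a (by omega) (by omega)]
        congr 1
        exact negpow_eq (by omega)
    have hneg : ∑ k ∈ Finset.Ioc 0 m, (-1 : ℝ) ^ k • b k = - disp3 b m := by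
      rw [disp3_as_Ioc, ← Finset.sum_neg_distrib]
      apply Finset.sum_congr rfl
      intro k _
      rw [pow_succ]
      module
    rw [hmap, hneg, hloop] at hsplit
    linear_combination (norm := module) hsplit
  -- Rewrite each term of the characteristic sum as `d_n ⨯₃ d_{n+1}`.
  unfold charSum
  have hterm : ∀ n ∈ Finset.Icc 1 (2 * N - 1),
      (-1 : ℝ) ^ n • ((disp3 b n) ⨯₃ (b (n + 1))) = (disp3 b n) ⨯₃ (disp3 b (n + 1)) := by
    intro n _
    rw [disp3_succ, LinearMap.map_add, LinearMap.map_smul, cross_self]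
    rw [show (-1 : ℝ) ^ (n + 2) = (-1 : ℝ) ^ n from by rw [pow_add]; ring]
    module
  rw [Finset.sum_congr rfl hterm]
  rcases Nat.eq_zero_or_pos N with h0 | hN
  · subst h0; simp
  -- Pairing `n ↔ 2N-1-n` kills the sum; the term at `n = 2N-1` vanishes by the loop condition.
  have hlast : (disp3 b (2 * N - 1)) ⨯₃ (disp3 b (2 * N - 1 + 1)) = 0 := by
    rw [show 2 * N - 1 + 1 = 2 * N from by omega, hloop, LinearMap.map_zero]
  apply Finset.sum_involution (fun n _ => if n = 2 * N - 1 then n else 2 * N - 1 - n)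
  · intro n hn
    simp only [Finset.mem_Icc] at hn
    by_cases hc : n = 2 * N - 1
    · subst hc
      simp [hlast]
    · simp only [if_neg hc]
      have e1 : disp3 b (2 * N - 1 - n) = disp3 b (n + 1) := by
        rw [show 2 * N - 1 - n = 2 * N - (n + 1) from by omega, hrefl (n + 1) (by omega)]
      have e2 : disp3 b (2 * N - 1 - n + 1) = disp3 b n := by
        rw [show 2 * N - 1 - n + 1 = 2 * N - n from by omega, hrefl n (by omega)]
      rw [e1, e2, ← cross_anticomm]
      abel
  · intro n hn hf
    simp only [Finset.mem_Icc] at hn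
    by_cases hc : n = 2 * N - 1
    · exfalso; apply hf; rw [hc, hlast]
    · simp only [if_neg hc]; omega
  · intro n hn
    simp only [Finset.mem_Icc] at hn ⊢
    split <;> omega
  · intro n hn
    simp only [Finset.mem_Icc] at hn
    by_cases hc : n = 2 * N - 1
    · simp [hc]
    · simp only [if_neg hc]
      rw [if_neg (by omega)]
      omega
end

section
/- Let b₁, …, b_{2N} ∈ ℝ³ be a loop drive (Σ_{n=1}^{2N} (−1)^{n+1} b_n = 0), and let b' = (b₂, b₃, …, b_{2N}, b₁) be its cyclic permutation by one step. Then b' is again a loop drive and its characteristic sum is unchanged: S(b') = S(b). Consequently any cyclic permutation of the steps of a loop drive preserves its signed area and characteristic reciprocal lattice vector. -/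
open Matrix Finset

private lemma hpow (i : ℕ) : (-1:ℝ)^(i+2) = (-1)^i := by rw [pow_add]; norm_num
private lemma Icc_range (f : ℕ → Fin 3 → ℝ) (n : ℕ) :
    ∑ k ∈ Finset.Icc 1 n, f k = ∑ i ∈ Finset.range n, f (i+1) := by
  rw [← Finset.Ico_add_one_right_eq_Icc, Finset.sum_Ico_eq_sum_range]
  refine Finset.sum_congr (by rw [Nat.add_sub_cancel]) fun i _ => by rw [add_comm]

private lemma disp3_range (b : ℕ → Fin 3 → ℝ) (n : ℕ) :
    disp3 b n = ∑ i ∈ Finset.range n, (-1:ℝ)^i • b (i+1) := by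
  rw [disp3, Icc_range]
  exact Finset.sum_congr rfl fun i _ => by rw [show i+1+1 = i+2 from rfl, hpow]

private lemma charSum_range (N : ℕ) (b : ℕ → Fin 3 → ℝ) :
    charSum N b
      = ∑ i ∈ Finset.range (2*N-1), (-1:ℝ)^(i+1) • (disp3 b (i+1) ⨯₃ b (i+2)) := by
  rw [charSum, Icc_range]

private lemma negflip (s : Finset ℕ) (g : ℕ → Fin 3 → ℝ) :
    ∑ i ∈ s, (-1:ℝ)^(i+1) • g i = -∑ i ∈ s, (-1:ℝ)^i • g i := by
  rw [← Finset.sum_neg_distrib]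
  exact Finset.sum_congr rfl fun i _ => by rw [pow_succ, mul_neg_one, neg_smul]

private lemma crossSub (u w v : Fin 3 → ℝ) : (u - w) ⨯₃ v = u ⨯₃ v - w ⨯₃ v := by
  rw [map_sub]; rfl

private lemma pull (s : Finset ℕ) (u : Fin 3 → ℝ) (g : ℕ → Fin 3 → ℝ) :
    ∑ i ∈ s, (-1:ℝ)^(i+1) • (u ⨯₃ g i) = u ⨯₃ (∑ i ∈ s, (-1:ℝ)^(i+1) • g i) := by
  rw [map_sum]
  exact Finset.sum_congr rfl fun i _ => (map_smul (crossProduct u) _ _).symm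

private lemma shift (g : ℕ → Fin 3 → ℝ) : ∀ n,
    ∑ i ∈ Finset.range (n+1), (-1:ℝ)^i • g (i+1)
      = g 1 - ∑ i ∈ Finset.range n, (-1:ℝ)^i • g (i+2)
  | 0 => by simp
  | (n+1) => by
    rw [Finset.sum_range_succ, shift g n, Finset.sum_range_succ, pow_succ, mul_neg_one,
      neg_smul, show n+1+1 = n+2 from rfl]
    abel

private lemma shift2 (g : ℕ → Fin 3 → ℝ) : ∀ n,
    ∑ i ∈ Finset.range (n+1), (-1:ℝ)^i • g (i+2)
      = g 2 - ∑ i ∈ Finset.range n, (-1:ℝ)^i • g (i+3)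
  | 0 => by simp
  | (n+1) => by
    rw [Finset.sum_range_succ, shift2 g n, Finset.sum_range_succ, pow_succ, mul_neg_one,
      neg_smul, show n+1+2 = n+3 from rfl]
    abel


/-- If `b₁, …, b_{2N}` is a loop drive
(`Σ_{n=1}^{2N} (−1)^{n+1} b_n = 0`) and `b' = (b₂, b₃, …, b_{2N}, b₁)` is its cyclic
permutation by one step, then `b'` is again a loop drive and `S(b') = S(b)`; hence
cyclic permutations of a loop drive preserve the signed area and the characteristic
reciprocal lattice vector. -/
theorem stmt_7 (N : ℕ) (b b' : ℕ → Fin 3 → ℝ)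
    (hloop : ∑ n ∈ Finset.Icc 1 (2 * N), (-1 : ℝ) ^ (n + 1) • b n = 0)
    (hb'₁ : ∀ n, 1 ≤ n → n ≤ 2 * N - 1 → b' n = b (n + 1))
    (hb'₂ : b' (2 * N) = b 1) :
    (∑ n ∈ Finset.Icc 1 (2 * N), (-1 : ℝ) ^ (n + 1) • b' n = 0)
    ∧ charSum N b' = charSum N b := by
  rcases Nat.eq_zero_or_pos N with hN | hN
  · subst hN
    exact ⟨by simp, by simp [charSum]⟩
  obtain ⟨m, hm⟩ : ∃ m, 2*N = m+2 := ⟨2*N-2, by omega⟩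
  have hm1 : 2*N - 1 = m+1 := by omega
  have hb'A : ∀ i, i ≤ m → b' (i+1) = b (i+2) := fun i hi =>
    hb'₁ (i+1) (by omega) (by omega)
  have hb'B : b' (m+2) = b 1 := by rw [← hm]; exact hb'₂
  have hd2N : disp3 b (2*N) = 0 := hloop
  have hd0 : disp3 b (m+2) = 0 := by rw [← hm]; exact hd2N
  have hL : ∑ i ∈ Finset.range (m+2), (-1:ℝ)^i • b (i+1) = 0 := by
    rw [← disp3_range]; exact hd0
  have hdisp1 : disp3 b 1 = b 1 := by
    rw [disp3_range, Finset.sum_range_one]; simp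
  have hA : ∑ i ∈ Finset.range (m+1), (-1:ℝ)^i • b (i+2) = b 1 := by
    have h := shift b (m+1)
    rw [hL, eq_comm, sub_eq_zero] at h
    exact h.symm
  have hB : ∑ i ∈ Finset.range m, (-1:ℝ)^i • b (i+3) = b 2 - b 1 := by
    have h := shift2 b m
    rw [hA] at h
    rw [h]; abel
  have hC : ∀ n, n ≤ m+1 → disp3 b' n = b 1 - disp3 b (n+1) := by
    intro n
    induction n with
    | zero => intro _; simp [disp3_range, Finset.sum_range_one]
    | succ n ih =>
      intro h
      have e1 : disp3 b' (n+1) = disp3 b' n + (-1:ℝ)^n • b' (n+1) := by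
        rw [disp3_range, disp3_range, Finset.sum_range_succ]
      have e2 : disp3 b (n+2) = disp3 b (n+1) + (-1:ℝ)^(n+1) • b (n+2) := by
        rw [disp3_range, disp3_range, Finset.sum_range_succ]
      rw [e1, ih (by omega), hb'A n (by omega), e2, pow_succ, mul_neg_one, neg_smul]
      abel
  have hmodd : (-1:ℝ)^(m+1) = -1 := Odd.neg_one_pow ⟨N-1, by omega⟩
  have part1 : ∑ n ∈ Finset.Icc 1 (2 * N), (-1 : ℝ) ^ (n + 1) • b' n = 0 := by
    show disp3 b' (2*N) = 0
    rw [hm]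
    have e1 : disp3 b' (m+2) = disp3 b' (m+1) + (-1:ℝ)^(m+1) • b' (m+2) := by
      rw [disp3_range, disp3_range, Finset.sum_range_succ]
    rw [e1, hC (m+1) le_rfl, hd0, hb'B, hmodd]
    simp
  refine ⟨part1, ?_⟩
  set D : Fin 3 → ℝ := ∑ i ∈ Finset.range m, (-1:ℝ)^i • (disp3 b (i+2) ⨯₃ b (i+3)) with hD
  have hSb : charSum N b = D - b 1 ⨯₃ b 2 := by
    rw [charSum_range, hm1,
      Finset.sum_range_succ' (fun i => (-1:ℝ)^(i+1) • (disp3 b (i+1) ⨯₃ b (i+2))) m]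
    have e1 : ∑ i ∈ Finset.range m,
        (-1:ℝ)^(i+1+1) • (disp3 b (i+1+1) ⨯₃ b (i+1+2)) = D := by
      rw [hD]
      refine Finset.sum_congr rfl fun i _ => ?_
      rw [show i+1+1 = i+2 from rfl, show i+1+2 = i+3 from rfl, hpow]
    rw [e1]
    rw [show (-1:ℝ)^(0+1) • (disp3 b (0+1) ⨯₃ b (0+2)) = -(b 1 ⨯₃ b 2) from by
      rw [show (0:ℕ)+1 = 1 from rfl, show (0:ℕ)+2 = 2 from rfl, pow_one, hdisp1, neg_one_smul]]
    abel
  have hSb' : charSum N b' = b 1 ⨯₃ (b 1 - b 2) + D := by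
    rw [charSum_range, hm1, Finset.sum_range_succ]
    have htop : (-1:ℝ)^(m+1) • (disp3 b' (m+1) ⨯₃ b' (m+2)) = 0 := by
      rw [hC (m+1) le_rfl, hd0, sub_zero, hb'B, cross_self, smul_zero]
    rw [htop, add_zero]
    have hmain : ∑ i ∈ Finset.range m, (-1:ℝ)^(i+1) • (disp3 b' (i+1) ⨯₃ b' (i+2))
        = ∑ i ∈ Finset.range m,
            ((-1:ℝ)^(i+1) • (b 1 ⨯₃ b (i+3)) - (-1:ℝ)^(i+1) • (disp3 b (i+2) ⨯₃ b (i+3))) := by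
      refine Finset.sum_congr rfl fun i hi => ?_
      have hi' := Finset.mem_range.mp hi
      have h1 : disp3 b' (i+1) = b 1 - disp3 b (i+2) := hC (i+1) (by omega)
      have h2 : b' (i+2) = b (i+3) := hb'A (i+1) (by omega)
      rw [h1, h2, crossSub, smul_sub]
    rw [hmain, Finset.sum_sub_distrib, pull, negflip (Finset.range m) (fun i => b (i+3)), hB,
      negflip (Finset.range m) (fun i => disp3 b (i+2) ⨯₃ b (i+3))]
    rw [show b 1 ⨯₃ (-(b 2 - b 1)) = b 1 ⨯₃ (b 1 - b 2) from by rw [neg_sub]]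
    rw [hD]; abel
  rw [hSb, hSb', map_sub, cross_self]
  abel
end

section
/- Let b⁽¹⁾ be a loop drive of even length 2N₁ in ℝ³ (Σ_{n=1}^{2N₁} (−1)^{n+1} b⁽¹⁾_n = 0) and let b⁽²⁾ be any drive of even length 2N₂ in ℝ³. Then the concatenated drive b = b⁽¹⁾ ⌢ b⁽²⁾ of length 2(N₁+N₂) satisfies S(b) = S(b⁽¹⁾) + S(b⁽²⁾). In particular, if b⁽²⁾ is also a loop drive, then b is a loop drive whose characteristic reciprocal lattice vector is the sum of those of b⁽¹⁾ and b⁽²⁾. -/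
open Matrix Finset

/-- If `b⁽¹⁾` is a loop drive of length `2N₁` and `b⁽²⁾` is any drive of
length `2N₂`, then the concatenated drive `b = b⁽¹⁾ ⌢ b⁽²⁾` of length `2(N₁+N₂)`
satisfies `S(b) = S(b⁽¹⁾) + S(b⁽²⁾)`; in particular if `b⁽²⁾` is also a loop drive then
`b` is a loop drive whose characteristic reciprocal lattice vector is the sum of those
of `b⁽¹⁾` and `b⁽²⁾`. -/
theorem stmt_8 (N₁ N₂ : ℕ) (b₁ b₂ b : ℕ → Fin 3 → ℝ)
    (hloop₁ : ∑ n ∈ Finset.Icc 1 (2 * N₁), (-1 : ℝ) ^ (n + 1) • b₁ n = 0)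
    (hcat₁ : ∀ n, 1 ≤ n → n ≤ 2 * N₁ → b n = b₁ n)
    (hcat₂ : ∀ n, 2 * N₁ < n → b n = b₂ (n - 2 * N₁)) :
    charSum (N₁ + N₂) b = charSum N₁ b₁ + charSum N₂ b₂
    ∧ ((∑ n ∈ Finset.Icc 1 (2 * N₂), (-1 : ℝ) ^ (n + 1) • b₂ n = 0) →
        ∑ n ∈ Finset.Icc 1 (2 * (N₁ + N₂)), (-1 : ℝ) ^ (n + 1) • b n = 0) := by
  have hIcc : ∀ m : ℕ, Finset.Icc 1 m = Finset.Ioc 0 m := by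
    intro m; ext x; simp; omega
  have hpow : ∀ m : ℕ, ((-1 : ℝ)) ^ (2 * N₁ + m) = (-1 : ℝ) ^ m := by
    intro m; rw [pow_add, pow_mul, neg_one_sq, one_pow, one_mul]
  have hdisp_eq : ∀ n, n ≤ 2 * N₁ → disp3 b n = disp3 b₁ n := by
    intro n hn
    refine Finset.sum_congr rfl fun k hk => ?_
    rw [Finset.mem_Icc] at hk
    rw [hcat₁ k hk.1 (hk.2.trans hn)]
  have hdb_a : disp3 b (2 * N₁) = 0 := by
    rw [hdisp_eq _ le_rfl]; exact hloop₁
  have hshift : ∀ m, (∑ k ∈ Finset.Ioc (2 * N₁) (2 * N₁ + m), (-1 : ℝ) ^ (k + 1) • b k)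
      = ∑ k ∈ Finset.Ioc 0 m, (-1 : ℝ) ^ (k + 1) • b₂ k := by
    intro m
    rw [show Finset.Ioc (2 * N₁) (2 * N₁ + m)
        = Finset.map (addLeftEmbedding (2 * N₁)) (Finset.Ioc 0 m) by
      rw [Finset.map_add_left_Ioc, add_zero]]
    rw [Finset.sum_map]
    refine Finset.sum_congr rfl fun k hk => ?_
    rw [Finset.mem_Ioc] at hk
    simp only [addLeftEmbedding_apply]
    rw [hcat₂ (2 * N₁ + k) (by omega), Nat.add_sub_cancel_left, add_assoc, hpow]
  have h0sum : (∑ k ∈ Finset.Ioc 0 (2 * N₁), (-1 : ℝ) ^ (k + 1) • b k) = 0 := by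
    have := hdb_a
    unfold disp3 at this
    rwa [hIcc] at this
  have hdisp_shift : ∀ m, disp3 b (2 * N₁ + m) = disp3 b₂ m := by
    intro m
    unfold disp3
    rw [hIcc, hIcc,
      ← Finset.sum_Ioc_consecutive _ (Nat.zero_le (2 * N₁)) (Nat.le_add_right (2 * N₁) m),
      h0sum, zero_add, hshift m]
  constructor
  · rcases Nat.eq_zero_or_pos N₂ with h2 | h2
    · subst h2
      have hc2 : charSum 0 b₂ = 0 := by simp [charSum]
      simp only [hc2, add_zero, Nat.add_zero]
      unfold charSum
      refine Finset.sum_congr rfl fun n hn => ?_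
      rw [Finset.mem_Icc] at hn
      rw [hdisp_eq n (by omega), hcat₁ (n + 1) (by omega) (by omega)]
    · have hsplit : 2 * (N₁ + N₂) - 1 = 2 * N₁ + (2 * N₂ - 1) := by omega
      unfold charSum
      rw [hIcc, hIcc, hIcc, hsplit,
        ← Finset.sum_Ioc_consecutive _ (Nat.zero_le (2 * N₁))
          (Nat.le_add_right (2 * N₁) (2 * N₂ - 1))]
      congr 1
      · -- first block equals S(b₁)
        rw [← Finset.sum_Ioc_consecutive _ (Nat.zero_le (2 * N₁ - 1)) (Nat.sub_le (2 * N₁) 1)]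
        have hz : (∑ n ∈ Finset.Ioc (2 * N₁ - 1) (2 * N₁),
            (-1 : ℝ) ^ n • ((disp3 b n) ⨯₃ (b (n + 1)))) = 0 := by
          refine Finset.sum_eq_zero fun n hn => ?_
          rw [Finset.mem_Ioc] at hn
          have : n = 2 * N₁ := by omega
          subst this
          rw [hdb_a]
          simp
        rw [hz, add_zero]
        refine Finset.sum_congr rfl fun n hn => ?_
        rw [Finset.mem_Ioc] at hn
        rw [hdisp_eq n (by omega), hcat₁ (n + 1) (by omega) (by omega)]
      · -- second block equals S(b₂)
        rw [show Finset.Ioc (2 * N₁) (2 * N₁ + (2 * N₂ - 1))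
            = Finset.map (addLeftEmbedding (2 * N₁)) (Finset.Ioc 0 (2 * N₂ - 1)) by
          rw [Finset.map_add_left_Ioc, add_zero]]
        rw [Finset.sum_map]
        refine Finset.sum_congr rfl fun n hn => ?_
        rw [Finset.mem_Ioc] at hn
        simp only [addLeftEmbedding_apply]
        rw [hdisp_shift, hpow, add_assoc, hcat₂ (2 * N₁ + (n + 1)) (by omega),
          Nat.add_sub_cancel_left]
  · intro hloop₂
    have h2N : 2 * (N₁ + N₂) = 2 * N₁ + 2 * N₂ := by ring
    rw [h2N, hIcc,
      ← Finset.sum_Ioc_consecutive _ (Nat.zero_le (2 * N₁)) (Nat.le_add_right (2 * N₁) (2 * N₂)),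
      h0sum, zero_add, hshift, ← hIcc]
    exact hloop₂
end
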